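/- arXiv:1007.2492 — 2 statements merged into one kernel-verified Lean document; each statement's English description precedes it below -/
import Mathlib

section
/- Let Φ : {(z₁,z₂) ∈ ℝ² : z₁² + z₂² < 1} × ℝ₊* → M₂(ℝ) be the map sending (z₁, z₂, z₃) to the matrix (z₃/(1 - z₁² - z₂²)) · [[(1+z₁)² + z₂², 2z₂], [2z₂, (1-z₁)² + z₂²]]. Then Φ is a bijection from the product of the open unit disc in ℝ² with the positive reals onto the set SDP(2) of 2×2 real symmetric positive definite matrices. -/
open Matrix
/-- The set of 2×2 real symmetric positive definite matrices. -/
def SDP2 : Set (Matrix (Fin 2) (Fin 2) ℝ) :=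
  {T | T.IsSymm ∧ ∀ x : Fin 2 → ℝ, x ≠ 0 → 0 < x ⬝ᵥ (T *ᵥ x)}

lemma quad_pos (a b c : ℝ) (ha : 0 < a) (hd : 0 < a*c - b^2)
    (x : Fin 2 → ℝ) (hx : x ≠ 0) :
    0 < x ⬝ᵥ (!![a,b;b,c] *ᵥ x) := by
  simp only [dotProduct, Matrix.mulVec, Fin.sum_univ_two, Matrix.cons_val', Matrix.cons_val_zero,
    Matrix.cons_val_one, Matrix.head_cons, Matrix.empty_val', Matrix.cons_val_fin_one,
    Matrix.head_fin_const, Matrix.of_apply]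
  rcases eq_or_ne (x 1) 0 with h1 | h1
  · have h0 : x 0 ≠ 0 := by
      intro h0; exact hx (funext fun i => by fin_cases i <;> simp [h0, h1])
    have h2 : 0 < x 0 ^ 2 := (sq_nonneg (x 0)).lt_of_ne (Ne.symm (pow_ne_zero 2 h0))
    rw [h1]; nlinarith [mul_pos ha h2]
  · have h2 : 0 < x 1 ^ 2 := (sq_nonneg (x 1)).lt_of_ne (Ne.symm (pow_ne_zero 2 h1))
    nlinarith [mul_pos hd h2, sq_nonneg (a * x 0 + b * x 1), ha]

lemma smul_fin2 (k a b c d : ℝ) : k • !![a,b;c,d] = !![k*a,k*b;k*c,k*d] := by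
  ext i j; fin_cases i <;> fin_cases j <;> simp

lemma isSymm_fin2 (a b c : ℝ) : (!![a,b;b,c]).IsSymm := by
  ext i j; fin_cases i <;> fin_cases j <;> simp [Matrix.transpose_apply]

lemma sdp2_entries (T : Matrix (Fin 2) (Fin 2) ℝ)
    (hsym : T.IsSymm) (hpos : ∀ x : Fin 2 → ℝ, x ≠ 0 → 0 < x ⬝ᵥ (T *ᵥ x)) :
    0 < T 0 0 ∧ 0 < T 1 1 ∧ 0 < T 0 0 * T 1 1 - T 0 1 ^ 2 ∧ T 1 0 = T 0 1 := by
  have hb : T 1 0 = T 0 1 := by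
    have := hsym.apply 0 1; simpa using this
  have ha : 0 < T 0 0 := by
    have := hpos ![1, 0] (by intro h; simpa using congrFun h 0)
    simpa [dotProduct, Matrix.mulVec, Fin.sum_univ_two] using this
  have hc : 0 < T 1 1 := by
    have := hpos ![0, 1] (by intro h; simpa using congrFun h 1)
    simpa [dotProduct, Matrix.mulVec, Fin.sum_univ_two] using this
  have hdet : 0 < T 0 0 * T 1 1 - T 0 1 ^ 2 := by
    have h := hpos ![T 0 1, -(T 0 0)] (by
      intro h
      have h1 : -(T 0 0) = 0 := by simpa using congrFun h 1
      linarith)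
    simp [dotProduct, Matrix.mulVec, Fin.sum_univ_two, hb] at h
    nlinarith [h, ha]
  exact ⟨ha, hc, hdet, hb⟩

noncomputable def SDPinv (T : Matrix (Fin 2) (Fin 2) ℝ) : ℝ × ℝ × ℝ :=
  ((T 0 0 - T 1 1) / (T 0 0 + T 1 1 + 2 * Real.sqrt (T 0 0 * T 1 1 - T 0 1 ^ 2)),
   2 * T 0 1 / (T 0 0 + T 1 1 + 2 * Real.sqrt (T 0 0 * T 1 1 - T 0 1 ^ 2)),
   Real.sqrt (T 0 0 * T 1 1 - T 0 1 ^ 2))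

/-- the map Φ is a bijection from (open unit disc) × ℝ₊* onto SDP(2). -/
theorem stmt_0 :
    Set.BijOn
      (fun p : ℝ × ℝ × ℝ =>
        (p.2.2 / (1 - p.1 ^ 2 - p.2.1 ^ 2)) •
          !![(1 + p.1) ^ 2 + p.2.1 ^ 2, 2 * p.2.1;
             2 * p.2.1, (1 - p.1) ^ 2 + p.2.1 ^ 2])
      {p : ℝ × ℝ × ℝ | p.1 ^ 2 + p.2.1 ^ 2 < 1 ∧ 0 < p.2.2}
      SDP2 := by
  apply Set.InvOn.bijOn (f' := SDPinv)
  · constructor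
    · -- LeftInvOn : SDPinv (f p) = p on the disc × ℝ₊
      rintro ⟨z₁, z₂, z₃⟩ ⟨h1, h3⟩
      simp only [Set.mem_setOf_eq] at h1 h3
      have hu : (0:ℝ) < 1 - z₁ ^ 2 - z₂ ^ 2 := by linarith
      have hk : 0 < z₃ / (1 - z₁ ^ 2 - z₂ ^ 2) := div_pos h3 hu
      simp only [smul_fin2, SDPinv]
      set k := z₃ / (1 - z₁ ^ 2 - z₂ ^ 2) with hkdef
      have hkk : k * (1 - z₁ ^ 2 - z₂ ^ 2) = z₃ := by
        rw [hkdef]; field_simp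
      simp only [Matrix.cons_val', Matrix.cons_val_zero, Matrix.cons_val_one, Matrix.head_cons,
        Matrix.empty_val', Matrix.cons_val_fin_one, Matrix.head_fin_const, Matrix.of_apply]
      have hsq : k * ((1 + z₁) ^ 2 + z₂ ^ 2) * (k * ((1 - z₁) ^ 2 + z₂ ^ 2))
          - (k * (2 * z₂)) ^ 2 = (k * (1 - z₁ ^ 2 - z₂ ^ 2)) ^ 2 := by ring
      rw [hsq, hkk, Real.sqrt_sq h3.le]
      have hden : k * ((1 + z₁) ^ 2 + z₂ ^ 2) + k * ((1 - z₁) ^ 2 + z₂ ^ 2) + 2 * z₃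
          = 4 * k := by rw [← hkk]; ring
      rw [hden, Prod.mk.injEq, Prod.mk.injEq]
      refine ⟨?_, ?_, rfl⟩
      · field_simp; ring
      · field_simp; ring
    · -- RightInvOn : f (SDPinv T) = T on SDP2
      rintro T ⟨hsym, hpos⟩
      obtain ⟨ha, hc, hdet, hb⟩ := sdp2_entries T hsym hpos
      simp only [SDPinv]
      set a := T 0 0 with hadef
      set b := T 0 1 with hbdef
      set c := T 1 1 with hcdef
      set d := Real.sqrt (a * c - b ^ 2) with hddef
      have hd0 : 0 < d := Real.sqrt_pos.mpr hdet
      have hd2 : d ^ 2 = a * c - b ^ 2 := Real.sq_sqrt hdet.le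
      have hD0 : 0 < a + c + 2 * d := by linarith
      have hD0' : a + c + 2 * d ≠ 0 := hD0.ne'
      have hu' : 1 - ((a - c) / (a + c + 2 * d)) ^ 2 - (2 * b / (a + c + 2 * d)) ^ 2
          = 4 * d / (a + c + 2 * d) := by
        field_simp
        linear_combination (-(4:ℝ)) * hd2
      have hk' : d / (4 * d / (a + c + 2 * d)) = (a + c + 2 * d) / 4 := by
        rw [div_div_eq_mul_div]
        field_simp [hd0.ne']
      have e1 : (a + c + 2 * d) / 4 * ((1 + (a - c) / (a + c + 2 * d)) ^ 2
          + (2 * b / (a + c + 2 * d)) ^ 2) = a := by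
        field_simp
        linear_combination (4:ℝ) * hd2
      have e2 : (a + c + 2 * d) / 4 * (2 * (2 * b / (a + c + 2 * d))) = b := by
        field_simp; ring
      have e3 : (a + c + 2 * d) / 4 * ((1 - (a - c) / (a + c + 2 * d)) ^ 2
          + (2 * b / (a + c + 2 * d)) ^ 2) = c := by
        field_simp
        linear_combination (4:ℝ) * hd2
      show _ • _ = T
      rw [hu', hk', smul_fin2, e1, e2, e3]
      rw [Matrix.eta_fin_two T, ← hadef, ← hbdef, ← hcdef, hb]
  · -- MapsTo f s SDP2
    rintro ⟨z₁, z₂, z₃⟩ ⟨h1, h3⟩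
    simp only [Set.mem_setOf_eq] at h1 h3
    have hu : (0:ℝ) < 1 - z₁ ^ 2 - z₂ ^ 2 := by linarith
    have hk : 0 < z₃ / (1 - z₁ ^ 2 - z₂ ^ 2) := div_pos h3 hu
    set k := z₃ / (1 - z₁ ^ 2 - z₂ ^ 2) with hkdef
    have hz1 : z₁ ^ 2 < 1 := by nlinarith [sq_nonneg z₂]
    have hz1' : -1 < z₁ := by nlinarith
    have hA : 0 < (1 + z₁) ^ 2 + z₂ ^ 2 := by nlinarith
    constructor
    · show (k • !![(1 + z₁) ^ 2 + z₂ ^ 2, 2 * z₂; 2 * z₂, (1 - z₁) ^ 2 + z₂ ^ 2]).IsSymm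
      rw [smul_fin2]
      exact isSymm_fin2 _ _ _
    · intro x hx
      show 0 < x ⬝ᵥ ((k • !![(1 + z₁) ^ 2 + z₂ ^ 2, 2 * z₂; 2 * z₂, (1 - z₁) ^ 2 + z₂ ^ 2]) *ᵥ x)
      rw [smul_fin2]
      apply quad_pos _ _ _ (by positivity) _ x hx
      have : k * ((1 + z₁) ^ 2 + z₂ ^ 2) * (k * ((1 - z₁) ^ 2 + z₂ ^ 2)) - (k * (2 * z₂)) ^ 2
          = (k * (1 - z₁ ^ 2 - z₂ ^ 2)) ^ 2 := by ring
      rw [this]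
      positivity
  · -- MapsTo SDPinv SDP2 s
    rintro T ⟨hsym, hpos⟩
    obtain ⟨ha, hc, hdet, hb⟩ := sdp2_entries T hsym hpos
    set a := T 0 0; set b := T 0 1; set c := T 1 1
    set d := Real.sqrt (a * c - b ^ 2) with hddef
    have hd0 : 0 < d := Real.sqrt_pos.mpr hdet
    have hd2 : d ^ 2 = a * c - b ^ 2 := Real.sq_sqrt hdet.le
    have hD0 : 0 < a + c + 2 * d := by linarith
    constructor
    · show ((a - c) / (a + c + 2 * d)) ^ 2 + (2 * b / (a + c + 2 * d)) ^ 2 < 1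
      rw [div_pow, div_pow, ← add_div, div_lt_one (by positivity)]
      nlinarith [mul_pos hd0 hD0]
    · exact hd0
end

section
/- For every pair of complex numbers α, β with |α|² − |β|² = 1, there exist real numbers φ, t, s such that the matrix [[α, β], [conj(β), conj(α)]] equals the product [[e^{iφ/2}, 0], [0, e^{−iφ/2}]] · [[cosh(t/2), sinh(t/2)], [sinh(t/2), cosh(t/2)]] · [[1+is, −is], [is, 1−is]]. -/
set_option maxHeartbeats 1000000

open Complex

/-- Iwasawa decomposition SU(1,1) = K·A·N. -/
theorem stmt_3 (α β : ℂ) (h : ‖α‖ ^ 2 - ‖β‖ ^ 2 = 1) :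
    ∃ φ t s : ℝ,
      !![α, β; (starRingEnd ℂ) β, (starRingEnd ℂ) α] =
        !![Complex.exp (I * φ / 2), 0; 0, Complex.exp (-(I * φ / 2))] *
        !![(Real.cosh (t / 2) : ℂ), (Real.sinh (t / 2) : ℂ);
           (Real.sinh (t / 2) : ℂ), (Real.cosh (t / 2) : ℂ)] *
        !![1 + I * s, -(I * s); I * s, 1 - I * s] := by
  have hu : α + β ≠ 0 := by
    intro h0
    have hb : β = -α := by linear_combination h0
    rw [hb] at h
    simp at h
  obtain ⟨u, hudef⟩ : ∃ u : ℂ, u = α + β := ⟨_, rfl⟩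
  have hune : u ≠ 0 := hudef ▸ hu
  obtain ⟨r, hrdef⟩ : ∃ r : ℝ, r = ‖u‖ := ⟨_, rfl⟩
  have hrpos : 0 < r := hrdef ▸ norm_pos_iff.mpr hune
  have hrne : (r : ℂ) ≠ 0 := by exact_mod_cast hrpos.ne'
  obtain ⟨y, hydef⟩ : ∃ y : ℝ, y = ((α - β) * (starRingEnd ℂ) u).im := ⟨_, rfl⟩
  refine ⟨2 * u.arg, 2 * Real.log r, y / (2 * r ^ 2), ?_⟩
  have harg : I * ((2 * u.arg : ℝ) : ℂ) / 2 = u.arg * I := by push_cast; ring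
  have he : Complex.exp (I * ((2 * u.arg : ℝ) : ℂ) / 2) = u / r := by
    rw [harg, eq_div_iff hrne, mul_comm, hrdef]
    exact Complex.norm_mul_exp_arg_mul_I u
  have hconj : u * (starRingEnd ℂ) u = (r : ℂ) ^ 2 := by
    rw [Complex.mul_conj, ← Complex.sq_norm, hrdef]
    push_cast
    ring
  have he' : Complex.exp (-(I * ((2 * u.arg : ℝ) : ℂ) / 2)) = (starRingEnd ℂ) u / r := by
    rw [Complex.exp_neg, he, inv_div, div_eq_div_iff hune hrne]
    linear_combination -hconj
  have hch : Real.cosh (2 * Real.log r / 2) = (r + r⁻¹) / 2 := by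
    rw [mul_div_cancel_left₀ _ (two_ne_zero), Real.cosh_log hrpos]
  have hsh : Real.sinh (2 * Real.log r / 2) = (r - r⁻¹) / 2 := by
    rw [mul_div_cancel_left₀ _ (two_ne_zero), Real.sinh_log hrpos]
  have hkey : (α - β) * (starRingEnd ℂ) u = 1 + y * I := by
    have h1 : α * (starRingEnd ℂ) α - β * (starRingEnd ℂ) β = 1 := by
      rw [Complex.mul_conj, Complex.mul_conj, ← Complex.ofReal_sub,
        ← Complex.sq_norm, ← Complex.sq_norm, h]
      norm_num
    have hre : ((α - β) * (starRingEnd ℂ) u).re = 1 := by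
      have h2 : ((α - β) * (starRingEnd ℂ) u) + (starRingEnd ℂ) ((α - β) * (starRingEnd ℂ) u) = 2 := by
        simp only [map_mul, Complex.conj_conj, map_sub, hudef, map_add]
        linear_combination 2 * h1
      rw [Complex.add_conj] at h2
      norm_cast at h2
      linarith
    have h3 := Complex.re_add_im ((α - β) * (starRingEnd ℂ) u)
    rw [hre] at h3
    rw [← h3, hydef]
    push_cast
    ring
  have hkey2 : ((starRingEnd ℂ) α - (starRingEnd ℂ) β) * u = 1 - y * I := by
    have := congrArg (starRingEnd ℂ) hkey
    simpa [map_mul, map_sub, map_add, Complex.conj_conj, Complex.conj_ofReal, mul_comm, sub_eq_add_neg] using this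
  have hcu : (starRingEnd ℂ) u = (starRingEnd ℂ) α + (starRingEnd ℂ) β := by
    rw [hudef, map_add]
  have E1 : 2*(r:ℂ)^2*α = u*((r:ℂ)^2 + 1 + I*y) := by
    linear_combination (u-2*α)*hconj - u*((starRingEnd ℂ) u)*hudef + u*hkey
  have E2 : 2*(r:ℂ)^2*β = u*((r:ℂ)^2 - 1 - I*y) := by
    linear_combination (u-2*β)*hconj - u*((starRingEnd ℂ) u)*hudef - u*hkey
  have E3 : 2*(r:ℂ)^2*((starRingEnd ℂ) β) = ((starRingEnd ℂ) u)*((r:ℂ)^2 - 1 + I*y) := by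
    linear_combination (((starRingEnd ℂ) u)-2*((starRingEnd ℂ) β))*hconj - u*((starRingEnd ℂ) u)*hcu - ((starRingEnd ℂ) u)*hkey2
  have E4 : 2*(r:ℂ)^2*((starRingEnd ℂ) α) = ((starRingEnd ℂ) u)*((r:ℂ)^2 + 1 - I*y) := by
    linear_combination (((starRingEnd ℂ) u)-2*((starRingEnd ℂ) α))*hconj - u*((starRingEnd ℂ) u)*hcu + ((starRingEnd ℂ) u)*hkey2
  obtain ⟨w, hw⟩ : ∃ w : ℂ, w = (starRingEnd ℂ) u := ⟨_, rfl⟩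
  obtain ⟨ca, hca⟩ : ∃ ca : ℂ, ca = (starRingEnd ℂ) α := ⟨_, rfl⟩
  obtain ⟨cb, hcb⟩ : ∃ cb : ℂ, cb = (starRingEnd ℂ) β := ⟨_, rfl⟩
  rw [← hw] at he' hconj E3 E4
  rw [← hca] at E4 ⊢
  rw [← hcb] at E3 ⊢
  ext i j
  fin_cases i <;> fin_cases j <;>
    simp only [Matrix.mul_apply, Fin.sum_univ_two, Matrix.cons_val', Matrix.cons_val_zero,
      Matrix.cons_val_one, Matrix.head_cons, Matrix.empty_val', Matrix.cons_val_fin_one,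
      Matrix.head_fin_const, he, he'] <;>
    push_cast [hch, hsh]
  all_goals simp only [Matrix.cons_val_zero, Matrix.cons_val_one, Matrix.head_cons,
    Matrix.cons_val', Matrix.empty_val', Matrix.cons_val_fin_one, Matrix.head_fin_const,
    Matrix.of_apply, Matrix.cons_val_fin_one, Fin.isValue, Matrix.cons_val_two, Matrix.tail_cons]
  · field_simp
    linear_combination (2*(r:ℂ)^2) * E1
  · field_simp
    linear_combination (2*(r:ℂ)^2) * E2
  · field_simp
    linear_combination (2*(r:ℂ)^2) * E3
  · field_simp
    linear_combination (2*(r:ℂ)^2) * E4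
end
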